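/- Let t ≥ 2 be an integer, λ a partition of length at most nt, and z an integer with −1 ≤ z ≤ t−1. Then t-core(λ) is of the form (a | a+z) in Frobenius notation for some strictly decreasing nonnegative integer sequence a (i.e., t-core(λ) is z-asymmetric) if and only if m_r(λ;nt) + m_{t−r−z−1}(λ;nt) = 2n for all 0 ≤ r ≤ t−z−1 and m_r(λ;nt) = n for all t−z ≤ r ≤ t−1, where the subscripts of m are taken modulo t. -/

import Mathlib

open scoped BigOperators

noncomputable section

/-! ## The ring of symmetric functions and basic operators -/

/-- The ring of symmetric functions `Λ` (with coefficients in `ℚ`, so that the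
half occurring in the definition of `sp_λ` is available), realised as the
polynomial ring in the algebraically independent complete homogeneous symmetric
functions `h₁, h₂, h₃, …`; the variable `n : ℕ` stands for `h_{n+1}`. -/
abbrev SymF : Type := MvPolynomial ℕ ℚ

/-- The complete homogeneous symmetric function `h_r ∈ Λ`, with `h_0 = 1` and
`h_r = 0` for `r < 0`. -/
def hh (r : ℤ) : SymF :=
  if r < 0 then 0 else if r = 0 then 1 else MvPolynomial.X (r.toNat - 1)

/-- The algebra homomorphism `φ_t : Λ → Λ` determined by `φ_t h_r = h_{r/t}`
if `t ∣ r` and `φ_t h_r = 0` otherwise. -/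
def phi (t : ℕ) : SymF →ₐ[ℚ] SymF :=
  MvPolynomial.aeval fun n =>
    if t ∣ (n + 1) then hh (((n + 1) / t : ℕ) : ℤ) else 0

/-- The elementary symmetric function `e_r`, via the Jacobi–Trudi determinant
`e_r = s_{(1^r)} = det_{1 ≤ i,j ≤ r}(h_{1 - i + j})`. -/
def ee (r : ℕ) : SymF :=
  Matrix.det (Matrix.of fun i j : Fin r => hh (1 + (j : ℤ) - (i : ℤ)))

/-- The involution `ω : Λ → Λ`, determined by `ω h_r = e_r`. -/
def omegaSym : SymF →ₐ[ℚ] SymF :=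
  MvPolynomial.aeval fun n => ee (n + 1)

/-- `(-1)^z` for an integer exponent `z`. -/
def msign (z : ℤ) : ℤ := if Even z then 1 else -1

/-! ## Partitions -/

/-- A partition, encoded as a weakly decreasing, eventually zero function
`ℕ → ℕ` (0-indexed: `f i` is the part `λ_{i+1}`). -/
def IsPartition (f : ℕ → ℕ) : Prop :=
  Antitone f ∧ ∃ N, ∀ i, N ≤ i → f i = 0

/-- The length `l(λ)` (number of nonzero parts). -/
def plen (f : ℕ → ℕ) : ℕ := sInf {N | ∀ i, N ≤ i → f i = 0}

/-- Containment `μ ⊆ λ` of partitions. -/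
def SubP (mu lam : ℕ → ℕ) : Prop := ∀ i, mu i ≤ lam i

/-- The conjugate partition `λ'`. -/
def conjP (f : ℕ → ℕ) : ℕ → ℕ := fun j => Set.ncard {i | j < f i}

/-- The Frobenius rank `rk(λ)` (side length of the Durfee square). -/
def rk (f : ℕ → ℕ) : ℕ := Set.ncard {i | i < f i}

/-- The size `|λ|` of a partition. -/
def psize (f : ℕ → ℕ) : ℕ := ∑ i ∈ Finset.range (plen f), f i

/-- `λ` is `z`-asymmetric, i.e. `λ = (a | a + z)` in Frobenius notation, which
amounts to `λ'_i = λ_i + z` for all `1 ≤ i ≤ rk(λ)`.  `(-1)`-asymmetric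
partitions are called orthogonal, `1`-asymmetric ones symplectic, and
`0`-asymmetric ones are exactly the self-conjugate ones. -/
def ZAsymmetric (z : ℤ) (f : ℕ → ℕ) : Prop :=
  ∀ i < rk f, (conjP f i : ℤ) = (f i : ℤ) + z

/-- The one-row partition `(c)`. -/
def rowP (c : ℕ) : ℕ → ℕ := fun i => if i = 0 then c else 0

/-- `λ` is a `t`-core: no box of the Young diagram has hook length `t`
(the hook length of the box `(i,j)` is `λ_i + λ'_j - i - j + 1`, 1-indexed). -/
def IsTCore (t : ℕ) (f : ℕ → ℕ) : Prop :=
  ∀ i j, j < f i → f i + conjP f j ≠ i + j + 1 + t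

/-! ## Schur functions and universal characters via Jacobi–Trudi determinants -/

/-- The Jacobi–Trudi determinant `det_{1 ≤ i,j ≤ n}(h_{λ_i - μ_j - i + j})`. -/
def sSkewN (lam mu : ℕ → ℕ) (n : ℕ) : SymF :=
  Matrix.det (Matrix.of fun i j : Fin n =>
    hh ((lam i : ℤ) - (mu j : ℤ) - (i : ℤ) + (j : ℤ)))

open Classical in
/-- The skew Schur function `s_{λ/μ}`, defined by the Jacobi–Trudi formula
(and `0` if `μ ⊄ λ`). -/
def sSkew (lam mu : ℕ → ℕ) : SymF :=
  if SubP mu lam then sSkewN lam mu (plen lam) else 0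

/-- The Schur function `s_λ`. -/
def sFun (lam : ℕ → ℕ) : SymF := sSkew lam fun _ => 0

/-- The universal orthogonal character
`o_λ = det_{1 ≤ i,j ≤ n}(h_{λ_i - i + j} - h_{λ_i - i - j})`. -/
def oU (lam : ℕ → ℕ) : SymF :=
  Matrix.det (Matrix.of fun i j : Fin (plen lam) =>
    hh ((lam i : ℤ) - (i : ℤ) + (j : ℤ)) -
      hh ((lam i : ℤ) - (i : ℤ) - (j : ℤ) - 2))

/-- The universal symplectic character
`sp_λ = (1/2) · det_{1 ≤ i,j ≤ n}(h_{λ_i - i + j} + h_{λ_i - i - j + 2})`. -/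
def spU (lam : ℕ → ℕ) : SymF :=
  (1 / 2 : ℚ) • Matrix.det (Matrix.of fun i j : Fin (plen lam) =>
    hh ((lam i : ℤ) - (i : ℤ) + (j : ℤ)) +
      hh ((lam i : ℤ) - (i : ℤ) - (j : ℤ)))

/-- The universal odd orthogonal character
`so_λ = det_{1 ≤ i,j ≤ n}(h_{λ_i - i + j} + h_{λ_i - i - j + 1})`. -/
def soU (lam : ℕ → ℕ) : SymF :=
  Matrix.det (Matrix.of fun i j : Fin (plen lam) =>
    hh ((lam i : ℤ) - (i : ℤ) + (j : ℤ)) +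
      hh ((lam i : ℤ) - (i : ℤ) - (j : ℤ) - 1))

/-- The variant `so⁻_λ = det_{1 ≤ i,j ≤ n}(h_{λ_i - i + j} - h_{λ_i - i - j + 1})`. -/
def soMinusU (lam : ℕ → ℕ) : SymF :=
  Matrix.det (Matrix.of fun i j : Fin (plen lam) =>
    hh ((lam i : ℤ) - (i : ℤ) + (j : ℤ)) -
      hh ((lam i : ℤ) - (i : ℤ) - (j : ℤ) - 1))

/-- The rational universal character `rs_{λ,μ}` (one alphabet), via Koike's block
determinant, for weakly decreasing integer sequences `λ`, `μ` of lengths `n`, `m`. -/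
def rsN (n m : ℕ) (lam mu : ℕ → ℤ) : SymF :=
  Matrix.det (Matrix.fromBlocks
    (Matrix.of fun i j : Fin n => hh (lam i - (i : ℤ) + (j : ℤ)))
    (Matrix.of fun (i : Fin n) (j : Fin m) => hh (lam i - (i : ℤ) - (j : ℤ) - 1))
    (Matrix.of fun (i : Fin m) (j : Fin n) => hh (mu i - (i : ℤ) - (j : ℤ) - 1))
    (Matrix.of fun i j : Fin m => hh (mu i - (i : ℤ) + (j : ℤ))))

/-- `rs_{λ,μ}` for partitions `λ`, `μ`. -/
def rsP (lam mu : ℕ → ℕ) : SymF :=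
  rsN (plen lam) (plen mu) (fun i => (lam i : ℤ)) fun i => (mu i : ℤ)

/-! ## Beta sets, cores, quotients and signs -/

/-- The beta set `β(λ; N) = {λ_i + N - i : 1 ≤ i ≤ N}`. -/
def betaSet (lam : ℕ → ℕ) (N : ℕ) : Finset ℕ :=
  (Finset.range N).image fun i => lam i + (N - 1 - i)

/-- `m_r(λ; N)`: the number of elements of `β(λ; N)` congruent to `r` mod `t`. -/
def mr (t : ℕ) (lam : ℕ → ℕ) (N r : ℕ) : ℕ :=
  ((betaSet lam N).filter fun x => x % t = r).card

/-- The `r`-th component `λ^{(r)}` of the `t`-quotient of `λ` (computed, as per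
the convention of the paper, from a beta set whose size is a multiple of `t`):
writing the elements of `β(λ; N)` in residue class `r` as `ξ_k t + r` with
`ξ_1 > ⋯ > ξ_m ≥ 0`, the `k`-th part is `ξ_k - m + k`. -/
def tQuot (t : ℕ) (lam : ℕ → ℕ) (r : ℕ) : ℕ → ℕ := fun k =>
  let N := t * (plen lam + 1)
  let S := (betaSet lam N).filter fun x => x % t = r
  if k < S.card then (S.sort (· ≤ ·)).getD (S.card - 1 - k) 0 / t + (k + 1) - S.card
  else 0

/-- The `t`-core of `λ`: its `i`-th part is `ξ̃_i - N + i` where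
`ξ̃_1 > ⋯ > ξ̃_N` are the integers `k t + r`, `0 ≤ k < m_r(λ; N)`, `0 ≤ r < t`. -/
def tCore (t : ℕ) (lam : ℕ → ℕ) : ℕ → ℕ := fun i =>
  let N := t * (plen lam + 1)
  let T := (Finset.range t).biUnion fun r =>
    (Finset.range (mr t lam N r)).image fun k => k * t + r
  if i < N then (T.sort (· ≤ ·)).getD (N - 1 - i) 0 + (i + 1) - N else 0

/-- The sign of the permutation `w_t(λ; N)` sorting the beta set so that the
residues mod `t` increase and the entries within a residue class decrease,
computed as `(-1)` to the number of inversions: an inversion is a pair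
`x > y` of elements of the beta set with `x mod t > y mod t`. -/
def sgnW (t : ℕ) (lam : ℕ → ℕ) (N : ℕ) : ℤ :=
  (-1) ^ ((betaSet lam N ×ˢ betaSet lam N).filter fun p : ℕ × ℕ =>
    p.2 < p.1 ∧ p.2 % t < p.1 % t).card

/-! ## Ribbons and tileability -/

/-- The cells of the skew shape `λ/μ` (0-indexed rows and columns). -/
def SkewCells (lam mu : ℕ → ℕ) : Set (ℕ × ℕ) := {c | mu c.1 ≤ c.2 ∧ c.2 < lam c.1}

/-- Two cells are adjacent if they share an edge. -/
def CellAdj (c d : ℕ × ℕ) : Prop :=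
  (c.1 = d.1 ∧ (c.2 + 1 = d.2 ∨ d.2 + 1 = c.2)) ∨
    (c.2 = d.2 ∧ (c.1 + 1 = d.1 ∨ d.1 + 1 = c.1))

/-- A set of cells is (edge-)connected. -/
def ConnectedCells (S : Set (ℕ × ℕ)) : Prop :=
  ∀ c ∈ S, ∀ d ∈ S, Relation.ReflTransGen (fun x y => x ∈ S ∧ y ∈ S ∧ CellAdj x y) c d

/-- The set of cells contains a `2 × 2` square. -/
def Has2x2 (S : Set (ℕ × ℕ)) : Prop :=
  ∃ i j, (i, j) ∈ S ∧ (i + 1, j) ∈ S ∧ (i, j + 1) ∈ S ∧ (i + 1, j + 1) ∈ S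

/-- The skew shape `λ/μ` is a `t`-ribbon: connected, `t` cells, no `2 × 2` square. -/
def IsRibbon (t : ℕ) (lam mu : ℕ → ℕ) : Prop :=
  SubP mu lam ∧ (SkewCells lam mu).ncard = t ∧
    ConnectedCells (SkewCells lam mu) ∧ ¬Has2x2 (SkewCells lam mu)

/-- The height of a ribbon `λ/μ`: one less than the number of rows it occupies. -/
def ribbonHeight (lam mu : ℕ → ℕ) : ℕ :=
  (Prod.fst '' SkewCells lam mu).ncard - 1

/-- `ν` (as `ν 0, ν 1, …, ν k`) is a ribbon decomposition of the skew shape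
`λ/μ` into `t`-ribbons: `ν 0 = μ`, `ν k = λ`, every `ν i` is a partition, and
each `ν (i+1) / ν i` is a `t`-ribbon. -/
def IsRibbonDecomp (t : ℕ) (mu lam : ℕ → ℕ) (k : ℕ) (ν : ℕ → ℕ → ℕ) : Prop :=
  ν 0 = mu ∧ ν k = lam ∧ (∀ i ≤ k, IsPartition (ν i)) ∧
    ∀ i < k, IsRibbon t (ν (i + 1)) (ν i)

/-- The height of a ribbon decomposition: the sum of the heights of its ribbons.
The sign `sgn_t(λ/μ)` is `(-1)` to this quantity (for any decomposition). -/
def decompHeight (ν : ℕ → ℕ → ℕ) (k : ℕ) : ℕ :=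
  ∑ i ∈ Finset.range k, ribbonHeight (ν (i + 1)) (ν i)

/-- The skew shape `λ/μ` is tileable by `t`-ribbons. -/
def Tileable (t : ℕ) (mu lam : ℕ → ℕ) : Prop :=
  ∃ k ν, IsRibbonDecomp t mu lam k ν

/-! ## The signs `ε` of Ayyer–Kumari -/

/-- The exponent `ε^o_{λ;nt}`. -/
def epsO (t : ℕ) (lam : ℕ → ℕ) (n : ℕ) : ℕ :=
  (∑ r ∈ Finset.Icc ((t + 2) / 2) (t - 1), Nat.choose (mr t lam (n * t) r + 1) 2)
    + rk (tCore t lam)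
    + if 2 ∣ t then Nat.choose (n + 1) 2 + n * rk (tCore t lam) else 0

/-- The exponent `ε^sp_{λ;nt}`. -/
def epsSp (t : ℕ) (lam : ℕ → ℕ) (n : ℕ) : ℕ :=
  (∑ r ∈ Finset.Icc (t / 2) (t - 2), Nat.choose (mr t lam (n * t) r + 1) 2)
    + if 2 ∣ t then Nat.choose (n + 1) 2 + n * rk (tCore t lam) else 0

/-- The exponent `ε^so_{λ;nt}`. -/
def epsSo (t : ℕ) (lam : ℕ → ℕ) (n : ℕ) : ℕ :=
  (∑ r ∈ Finset.Icc ((t + 1) / 2) (t - 1), Nat.choose (mr t lam (n * t) r + 1) 2)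
    + if 2 ∣ t then 0 else n * rk (tCore t lam)

/-! ## Evaluation at a finite complex alphabet -/

/-- The complete homogeneous polynomial `h_r(y₁,…,y_N)` evaluated at complex
numbers: the sum over all multisets of size `r` of the product of the values. -/
def hEval {N : ℕ} (y : Fin N → ℂ) (r : ℕ) : ℂ :=
  ∑ m ∈ (Finset.univ : Finset (Fin N)).sym r, (Multiset.map y (m : Multiset (Fin N))).prod

/-- Evaluation of a universal symmetric function at the finite alphabet
`y₁, …, y_N` (substituting `h_r ↦ h_r(y)`). -/
def evalSym {N : ℕ} (y : Fin N → ℂ) : SymF →ₐ[ℚ] ℂ :=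
  MvPolynomial.aeval fun n => hEval y (n + 1)

/-- The Schur polynomial `s_λ(y₁,…,y_N)` (equal to the ratio of alternants when
the `y_i` are distinct, and `0` when `l(λ) > N`). -/
def schurC {N : ℕ} (lam : ℕ → ℕ) (y : Fin N → ℂ) : ℂ := evalSym y (sFun lam)

/-- The algebra homomorphism `φ_t^q : Λ → Λ[q]` with
`φ_t^q h_{at+b} = q^b ∑_{k ≥ 0} q^{kt} h_{a-k}` for `a ≥ 0`, `0 ≤ b ≤ t-1`
(the sum is finite since `h_{a-k} = 0` for `k > a`). -/
def phiQ (t : ℕ) : SymF →ₐ[ℚ] Polynomial SymF :=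
  MvPolynomial.aeval fun m =>
    ∑ k ∈ Finset.range ((m + 1) / t + 1),
      Polynomial.C (hh ((((m + 1) / t - k : ℕ)) : ℤ)) *
        Polynomial.X ^ ((m + 1) % t + k * t)


open Finset

namespace AK

/-- down-closed finsets of ℕ are ranges -/
lemma downclosed_eq_range (s : Finset ℕ) (h : ∀ i ∈ s, ∀ j ≤ i, j ∈ s) :
    s = Finset.range s.card := by
  have h1 : s ⊆ Finset.range s.card := by
    intro y hy
    rw [Finset.mem_range]
    by_contra hc
    push_neg at hc
    have : Finset.range (y + 1) ⊆ s := by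
      intro x hx
      exact h y hy x (by simpa using Nat.lt_succ_iff.mp (Finset.mem_range.mp hx))
    have := Finset.card_le_card this
    simp at this; omega
  exact Finset.eq_of_subset_of_card_le h1 (by simp)

lemma mem_downclosed_iff (s : Finset ℕ) (h : ∀ i ∈ s, ∀ j ≤ i, j ∈ s) (x : ℕ) :
    x ∈ s ↔ x < s.card := by
  conv_lhs => rw [downclosed_eq_range s h]
  simp

/-- two strictly monotone maps on [0,k) with the same image agree -/
lemma strictmono_image_eq (k : ℕ) (f g : ℕ → ℕ)
    (hf : ∀ i j, i < j → j < k → f i < f j) (hg : ∀ i j, i < j → j < k → g i < g j)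
    (hfg : ∀ i < k, ∃ j < k, f i = g j) (hgf : ∀ j < k, ∃ i < k, g j = f i) :
    ∀ i < k, f i = g i := by
  intro i
  induction i using Nat.strong_induction_on with
  | _ i ih =>
    intro hik
    obtain ⟨j, hjk, hj⟩ := hfg i hik
    obtain ⟨i', hi'k, hi'⟩ := hgf i hik
    have hji : i ≤ j := by
      by_contra hc
      push_neg at hc
      have := ih j (by omega) (by omega)
      -- g j = f j and f i = g j so f i = f j with j < i : contradiction to strict mono
      have : f j = f i := by omega
      have := hf j i hc hik
      omega
    have hii' : i ≤ i' := by
      by_contra hc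
      push_neg at hc
      have := ih i' (by omega) (by omega)
      have : g i' = g i := by omega
      have := hg i' i hc hik
      omega
    have h1 : g i ≤ g j := by
      rcases Nat.eq_or_lt_of_le hji with h | h
      · exact le_of_eq (by rw [h])
      · exact le_of_lt (hg i j h hjk)
    have h2 : f i ≤ f i' := by
      rcases Nat.eq_or_lt_of_le hii' with h | h
      · exact le_of_eq (by rw [h])
      · exact le_of_lt (hf i i' h hi'k)
    omega

variable (t : ℕ) (lam : ℕ → ℕ)

def N0 : ℕ := t * (plen lam + 1)

def Tset : Finset ℕ :=
  (Finset.range t).biUnion fun r =>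
    (Finset.range (mr t lam (N0 t lam) r)).image fun k => k * t + r

def bfun : ℕ → ℕ := fun j => ((Tset t lam).sort (· ≤ ·)).getD j 0

def cfun (j : ℕ) : ℕ :=
  ((Finset.range (N0 t lam)).filter fun j' => bfun t lam j' ≤ j + j').card

def gfun (j : ℕ) : ℕ := j + cfun t lam j

def sig : ℕ :=
  ((Finset.range (N0 t lam)).filter fun j' => bfun t lam j' < N0 t lam).card

def kk : ℕ := N0 t lam - sig t lam

lemma tCore_eq (i : ℕ) :
    tCore t lam i = if i < N0 t lam then
      bfun t lam (N0 t lam - 1 - i) + (i + 1) - N0 t lam else 0 := rfl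

variable {t lam}

lemma plen_spec (hp : IsPartition lam) : ∀ i, plen lam ≤ i → lam i = 0 := by
  have : {N | ∀ i, N ≤ i → lam i = 0}.Nonempty := by
    obtain ⟨N, hN⟩ := hp.2; exact ⟨N, hN⟩
  exact Nat.sInf_mem this

lemma betaSet_card (hp : IsPartition lam) (N : ℕ) : (betaSet lam N).card = N := by
  rw [betaSet, Finset.card_image_of_injOn, Finset.card_range]
  intro i hi j hj hij
  simp only [Finset.coe_range, Set.mem_Iio] at hi hj
  have hij' : lam i + (N - 1 - i) = lam j + (N - 1 - j) := by simpa using hij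
  by_contra hne
  rcases Nat.lt_or_ge i j with h | h
  · have := hp.1 (le_of_lt h); omega
  · have hlt : j < i := by omega
    have := hp.1 (le_of_lt hlt); omega

lemma sum_mr (hp : IsPartition lam) (N : ℕ) (ht : 0 < t) :
    ∑ r ∈ Finset.range t, mr t lam N r = N := by
  unfold mr
  have h := Finset.card_eq_sum_card_fiberwise (s := betaSet lam N) (t := Finset.range t)
    (f := fun x => x % t) (fun x _ => Finset.mem_range.mpr (Nat.mod_lt x ht))
  rw [betaSet_card hp N] at h
  exact h.symm


lemma mem_Tset (ht : 0 < t) (x : ℕ) :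
    x ∈ Tset t lam ↔ x < t * mr t lam (N0 t lam) (x % t) := by
  constructor
  · intro hx
    simp only [Tset, Finset.mem_biUnion, Finset.mem_range, Finset.mem_image] at hx
    obtain ⟨r, hr, k, hk, rfl⟩ := hx
    have hmod : (k * t + r) % t = r := by
      rw [Nat.mul_comm k t, Nat.mul_add_mod]
      exact Nat.mod_eq_of_lt hr
    rw [hmod]
    nlinarith
  · intro hx
    simp only [Tset, Finset.mem_biUnion, Finset.mem_range, Finset.mem_image]
    refine ⟨x % t, Nat.mod_lt x ht, x / t, ?_, ?_⟩
    · have := Nat.div_mul_le_self x t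
      have h2 : x / t * t < mr t lam (N0 t lam) (x % t) * t := by
        have hxe := Nat.div_add_mod x t
        nlinarith [Nat.mod_lt x ht]
      exact Nat.lt_of_mul_lt_mul_right h2
    · rw [Nat.mul_comm (x / t) t]
      exact Nat.div_add_mod x t

lemma card_Tset (hp : IsPartition lam) (ht : 0 < t) : (Tset t lam).card = N0 t lam := by
  rw [Tset, Finset.card_biUnion]
  · have : ∀ r ∈ Finset.range t,
        ((Finset.range (mr t lam (N0 t lam) r)).image fun k => k * t + r).card
          = mr t lam (N0 t lam) r := by
      intro r _
      rw [Finset.card_image_of_injective _ (fun a b hab => by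
        have h3 : a * t = b * t := by omega
        exact Nat.eq_of_mul_eq_mul_right ht h3), Finset.card_range]
    rw [Finset.sum_congr rfl this]
    exact sum_mr hp (N0 t lam) ht
  · intro r hr r' hr' hne
    simp only [Finset.coe_range, Set.mem_Iio, Function.onFun] at hr hr' ⊢
    rw [Finset.disjoint_left]
    intro a ha ha'
    simp only [Finset.mem_image, Finset.mem_range] at ha ha'
    obtain ⟨k, _, rfl⟩ := ha
    obtain ⟨k', _, h⟩ := ha'
    have h1 : (k * t + r) % t = r := by
      rw [Nat.mul_comm k t, Nat.mul_add_mod]; exact Nat.mod_eq_of_lt hr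
    have h2 : (k' * t + r') % t = r' := by
      rw [Nat.mul_comm k' t, Nat.mul_add_mod]; exact Nat.mod_eq_of_lt hr'
    exact hne (by rw [← h1, ← h2, h])

section BFacts

variable (hp : IsPartition lam) (ht : 0 < t)
include hp ht

lemma sort_length : ((Tset t lam).sort (· ≤ ·)).length = N0 t lam := by
  rw [Finset.length_sort]; exact card_Tset hp ht

lemma bfun_mem {j : ℕ} (hj : j < N0 t lam) : bfun t lam j ∈ Tset t lam := by
  rw [bfun, ← Finset.mem_sort (α := ℕ) (· ≤ ·),
    List.getD_eq_getElem _ 0 (by rw [sort_length hp ht]; exact hj)]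
  exact List.getElem_mem _

lemma bfun_strictmono {i j : ℕ} (hij : i < j) (hj : j < N0 t lam) :
    bfun t lam i < bfun t lam j := by
  have hl := sort_length (lam := lam) hp ht
  simp only [bfun]
  rw [List.getD_eq_getElem _ 0 (by omega), List.getD_eq_getElem _ 0 (by omega)]
  exact List.Pairwise.rel_get_of_lt (Finset.sortedLT_sort _).pairwise (by simpa using hij)

lemma bfun_surj {x : ℕ} (hx : x ∈ Tset t lam) : ∃ j < N0 t lam, bfun t lam j = x := by
  rw [← Finset.mem_sort (α := ℕ) (· ≤ ·)] at hx
  obtain ⟨⟨j, hj⟩, hjx⟩ := List.get_of_mem hx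
  refine ⟨j, by rw [← sort_length hp ht]; exact hj, ?_⟩
  rw [bfun, List.getD_eq_getElem _ 0 hj]
  exact hjx

lemma bfun_step {i j : ℕ} (hij : i ≤ j) (hj : j < N0 t lam) :
    bfun t lam i + (j - i) ≤ bfun t lam j := by
  rcases Nat.eq_or_lt_of_le hij with h | h
  · subst h; simp
  · have h2 : ∀ d, i + d < N0 t lam → bfun t lam i + d ≤ bfun t lam (i + d) := by
      intro d
      induction d with
      | zero => simp
      | succ d ihd =>
        intro hd
        have h3 := bfun_strictmono hp ht (i := i + d) (j := i + d + 1) (by omega) (by omega)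
        have h4 := ihd (by omega)
        show bfun t lam i + (d + 1) ≤ bfun t lam (i + d + 1)
        omega
    have := h2 (j - i) (by omega)
    have he : i + (j - i) = j := by omega
    rw [he] at this
    exact this

lemma bfun_ge {j : ℕ} (hj : j < N0 t lam) : j ≤ bfun t lam j := by
  have := bfun_step hp ht (i := 0) (j := j) (by omega) hj
  omega

end BFacts

section CG

variable (hp : IsPartition lam) (ht : 0 < t)
include hp ht

lemma cfun_le (j : ℕ) : cfun t lam j ≤ N0 t lam := by
  rw [cfun]
  calc _ ≤ (Finset.range (N0 t lam)).card := Finset.card_filter_le _ _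
  _ = N0 t lam := Finset.card_range _

lemma cfun_iff (j : ℕ) : ∀ j' < N0 t lam, (bfun t lam j' ≤ j + j' ↔ j' < cfun t lam j) := by
  intro j' hj'
  have hdc : ∀ i ∈ (Finset.range (N0 t lam)).filter fun j' => bfun t lam j' ≤ j + j',
      ∀ i' ≤ i, i' ∈ (Finset.range (N0 t lam)).filter fun j' => bfun t lam j' ≤ j + j' := by
    intro i hi i' hi'
    simp only [Finset.mem_filter, Finset.mem_range] at hi ⊢
    have := bfun_step hp ht hi' hi.1
    exact ⟨by omega, by omega⟩
  have := mem_downclosed_iff _ hdc j'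
  simp only [Finset.mem_filter, Finset.mem_range] at this
  rw [← cfun] at this
  constructor
  · intro h; exact (this.mp ⟨hj', h⟩)
  · intro h; exact (this.mpr h).2

lemma cfun_mono {j j2 : ℕ} (hj : j ≤ j2) : cfun t lam j ≤ cfun t lam j2 := by
  apply Finset.card_le_card
  intro x hx
  simp only [Finset.mem_filter, Finset.mem_range] at hx ⊢
  exact ⟨hx.1, by omega⟩

lemma gfun_strictmono {j j2 : ℕ} (hj : j < j2) : gfun t lam j < gfun t lam j2 := by
  have := cfun_mono hp ht (le_of_lt hj) (lam := lam)
  simp only [gfun]; omega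

lemma gfun_not_mem (j : ℕ) : gfun t lam j ∉ Tset t lam := by
  intro hmem
  obtain ⟨j', hj', hb⟩ := bfun_surj hp ht hmem
  have hiff := cfun_iff hp ht j j' hj'
  rcases Nat.lt_or_ge j' (cfun t lam j) with h | h
  · have : bfun t lam j' ≤ j + j' := hiff.mpr h
    have : j' < cfun t lam j := h
    -- bfun j' = gfun j = j + cfun j > j + j' since j' ≤ cfun j - 1
    rw [gfun] at hb
    omega
  · -- j' ≥ cfun j: bfun j' ≥ bfun (cfun j) ≥ ... > j + cfun j
    have hc : cfun t lam j < N0 t lam := by omega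
    have h1 : ¬ (bfun t lam (cfun t lam j) ≤ j + cfun t lam j) := by
      intro hcon
      have := (cfun_iff hp ht j (cfun t lam j) hc).mp hcon
      omega
    have h2 := bfun_step hp ht h hj'
    rw [gfun] at hb
    omega

lemma gfun_surj {x : ℕ} (hx : x ∉ Tset t lam) : ∃ j, gfun t lam j = x := by
  classical
  set d := ((Finset.range (N0 t lam)).filter fun j' => bfun t lam j' < x).card with hd
  have hdc : ∀ i ∈ (Finset.range (N0 t lam)).filter fun j' => bfun t lam j' < x,
      ∀ i' ≤ i, i' ∈ (Finset.range (N0 t lam)).filter fun j' => bfun t lam j' < x := by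
    intro i hi i' hi'
    simp only [Finset.mem_filter, Finset.mem_range] at hi ⊢
    have := bfun_step hp ht hi' hi.1
    exact ⟨by omega, by omega⟩
  have hdiff := fun j' => mem_downclosed_iff _ hdc j'
  simp only [Finset.mem_filter, Finset.mem_range, ← hd] at hdiff
  -- d ≤ x : the map bfun is injective on the filter, image ⊆ range x
  have hdx : d ≤ x := by
    rw [hd]
    have := Finset.card_le_card_of_injOn (f := bfun t lam)
      (s := (Finset.range (N0 t lam)).filter fun j' => bfun t lam j' < x)
      (t := Finset.range x) ?_ ?_
    · simpa using this
    · intro a ha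
      simp only [Finset.mem_coe, Finset.mem_filter, Finset.mem_range] at ha ⊢
      exact ha.2
    · intro a ha b hb hab
      simp only [Finset.coe_filter, Finset.mem_range, Set.mem_setOf_eq] at ha hb
      by_contra hne
      rcases Nat.lt_or_ge a b with h | h
      · have := bfun_strictmono hp ht h hb.1; omega
      · have : b < a := by omega
        have := bfun_strictmono hp ht this ha.1; omega
  refine ⟨x - d, ?_⟩
  have hcd : cfun t lam (x - d) = d := by
    have hiffd : ∀ j' < N0 t lam, (bfun t lam j' ≤ (x - d) + j' ↔ j' < d) := by
      intro j' hj'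
      constructor
      · intro h
        by_contra hge
        push_neg at hge
        -- bfun d ≥ x (since ¬ bfun d < x would follow from threshold) and ≠ x
        have hdn : d ≤ N0 t lam := by
          rw [hd]
          calc _ ≤ (Finset.range (N0 t lam)).card := Finset.card_filter_le _ _
          _ = _ := Finset.card_range _
        have hdlt : d < N0 t lam := by omega
        have h1 : ¬ (bfun t lam d < x) := by
          intro hcon; have := (hdiff d).mp ⟨hdlt, hcon⟩; omega
        have h2 : bfun t lam d ≠ x := by
          intro hcon; rw [← hcon] at hx; exact hx (bfun_mem hp ht hdlt)
        have h3 := bfun_step hp ht hge hj'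
        omega
      · intro h
        have hdlt : d ≤ N0 t lam := by
          rw [hd]
          calc _ ≤ (Finset.range (N0 t lam)).card := Finset.card_filter_le _ _
          _ = _ := Finset.card_range _
        -- j' < d : bfun j' < x and stepping up to d-1
        have h1 : bfun t lam (d - 1) < x := ((hdiff (d-1)).mpr (by omega)).2
        have h2 := bfun_step hp ht (show j' ≤ d - 1 by omega) (show d - 1 < N0 t lam by omega)
        omega
    have h4 := cfun_iff hp ht (x - d)
    -- both describe initial segments of [0, N0): cardinalities equal
    rcases Nat.lt_trichotomy (cfun t lam (x - d)) d with h | h | h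
    · have hlt : cfun t lam (x - d) < N0 t lam := by
        have h5 : d ≤ N0 t lam := by
          rw [hd]
          calc _ ≤ (Finset.range (N0 t lam)).card := Finset.card_filter_le _ _
          _ = _ := Finset.card_range _
        omega
      have ha := (hiffd _ hlt).mpr h
      have hb2 := (h4 _ hlt).mp ha
      omega
    · exact h
    · have hlt : d < N0 t lam := by
        have := cfun_le hp ht (lam := lam) (x - d); omega
      have ha := (h4 _ hlt).mpr h
      have hb2 := (hiffd _ hlt).mp ha
      omega
  rw [gfun, hcd]
  omega

lemma sig_iff : ∀ j' < N0 t lam, (bfun t lam j' < N0 t lam ↔ j' < sig t lam) := by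
  intro j' hj'
  have hdc : ∀ i ∈ (Finset.range (N0 t lam)).filter fun j' => bfun t lam j' < N0 t lam,
      ∀ i' ≤ i, i' ∈ (Finset.range (N0 t lam)).filter fun j' => bfun t lam j' < N0 t lam := by
    intro i hi i' hi'
    simp only [Finset.mem_filter, Finset.mem_range] at hi ⊢
    have := bfun_step hp ht hi' hi.1
    exact ⟨by omega, by omega⟩
  have := mem_downclosed_iff _ hdc j'
  simp only [Finset.mem_filter, Finset.mem_range] at this
  rw [← sig] at this
  constructor
  · intro h; exact this.mp ⟨hj', h⟩
  · intro h; exact (this.mpr h).2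

lemma sig_le : sig t lam ≤ N0 t lam := by
  rw [sig]
  calc _ ≤ (Finset.range (N0 t lam)).card := Finset.card_filter_le _ _
  _ = _ := Finset.card_range _

end CG

section Mu

variable (hp : IsPartition lam) (ht : 0 < t)
include hp ht

lemma mu_eq {i : ℕ} (hi : i < N0 t lam) :
    tCore t lam i + (N0 t lam - 1 - i) = bfun t lam (N0 t lam - 1 - i) := by
  rw [tCore_eq, if_pos hi]
  have := bfun_ge hp ht (j := N0 t lam - 1 - i) (by omega)
  omega

omit hp ht in
lemma mu_zero {i : ℕ} (hi : N0 t lam ≤ i) : tCore t lam i = 0 := by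
  rw [tCore_eq, if_neg (by omega)]

lemma durfee_iff (i : ℕ) : i < tCore t lam i ↔ i < kk t lam := by
  have hkle : kk t lam ≤ N0 t lam := by rw [kk]; omega
  rcases Nat.lt_or_ge i (N0 t lam) with hi | hi
  · have hmu := mu_eq hp ht hi
    have hsig := sig_iff hp ht (N0 t lam - 1 - i) (by omega)
    have hsl := sig_le hp ht (lam := lam)
    rw [kk]
    omega
  · rw [mu_zero hi]
    omega

lemma rk_tCore : rk (tCore t lam) = kk t lam := by
  rw [rk]
  have : {i | i < tCore t lam i} = ↑(Finset.range (kk t lam)) := by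
    ext i
    simp only [Set.mem_setOf_eq, Finset.coe_range, Set.mem_Iio]
    exact durfee_iff hp ht i
  rw [this, Set.ncard_coe_finset, Finset.card_range]

lemma conj_tCore (j : ℕ) : conjP (tCore t lam) j = N0 t lam - cfun t lam j := by
  rw [conjP]
  have hcle := cfun_le hp ht (lam := lam) j
  have : {i | j < tCore t lam i} = ↑(Finset.range (N0 t lam - cfun t lam j)) := by
    ext i
    simp only [Set.mem_setOf_eq, Finset.coe_range, Set.mem_Iio]
    rcases Nat.lt_or_ge i (N0 t lam) with hi | hi
    · have hmu := mu_eq hp ht hi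
      have hc := cfun_iff hp ht j (N0 t lam - 1 - i) (by omega)
      omega
    · rw [mu_zero hi]
      omega
  rw [this, Set.ncard_coe_finset, Finset.card_range]

lemma zasym_iff_star (z : ℤ) :
    ZAsymmetric z (tCore t lam) ↔
      ∀ i < kk t lam, (gfun t lam i : ℤ) =
        2 * (N0 t lam : ℤ) - 1 - z - bfun t lam (N0 t lam - 1 - i) := by
  rw [ZAsymmetric, rk_tCore hp ht]
  apply forall_congr'
  intro i
  apply imp_congr_right
  intro hik
  have hkle : kk t lam ≤ N0 t lam := by rw [kk]; omega
  have hi : i < N0 t lam := by omega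
  have hmu := mu_eq hp ht hi
  have hconj := conj_tCore hp ht (lam := lam) i
  have hcle := cfun_le hp ht (lam := lam) i
  have hbge := bfun_ge hp ht (j := N0 t lam - 1 - i) (by omega)
  rw [hconj, gfun]
  constructor
  · intro h
    have h2 : ((N0 t lam : ℤ) - cfun t lam i) = (tCore t lam i : ℤ) + z := by
      rw [← h]; push_cast [hcle]; ring
    have h3 : (tCore t lam i : ℤ) = (bfun t lam (N0 t lam - 1 - i) : ℤ)
        - (N0 t lam - 1 - i : ℕ) := by
      have : (tCore t lam i : ℤ) + ((N0 t lam : ℤ) - 1 - i)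
          = bfun t lam (N0 t lam - 1 - i) := by
        push_cast [← hmu]
        have : ((N0 t lam - 1 - i : ℕ) : ℤ) = (N0 t lam : ℤ) - 1 - i := by push_cast; omega
        omega
      omega
    push_cast at h2 h3 ⊢
    have : ((N0 t lam - 1 - i : ℕ) : ℤ) = (N0 t lam : ℤ) - 1 - i := by push_cast; omega
    omega
  · intro h
    push_cast at h ⊢
    have h5 : ((N0 t lam - 1 - i : ℕ) : ℤ) = (N0 t lam : ℤ) - 1 - i := by push_cast; omega
    have h6 : (tCore t lam i : ℤ) + ((N0 t lam : ℤ) - 1 - i)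
        = bfun t lam (N0 t lam - 1 - i) := by
      rw [← h5, ← Nat.cast_add, hmu]
    have h7 : ((N0 t lam - cfun t lam i : ℕ) : ℤ) = (N0 t lam : ℤ) - cfun t lam i := by
      push_cast [hcle]; ring
    omega

lemma gfun_lt_iff (j : ℕ) : gfun t lam j < N0 t lam ↔ j < kk t lam := by
  classical
  -- A := gaps below N0; C := indices j with gfun j < N0
  set A := (Finset.range (N0 t lam)).filter (fun x => x ∉ Tset t lam) with hA
  have hAcard : A.card = kk t lam := by
    have h1 : (Finset.range (N0 t lam)).filter (fun x => x ∈ Tset t lam)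
        = (Finset.range (sig t lam)).image (bfun t lam) := by
      ext x
      simp only [Finset.mem_filter, Finset.mem_range, Finset.mem_image]
      constructor
      · rintro ⟨hx1, hx2⟩
        obtain ⟨j', hj', hb⟩ := bfun_surj hp ht hx2
        exact ⟨j', (sig_iff hp ht j' hj').mp (by omega), hb⟩
      · rintro ⟨j', hj', rfl⟩
        have hjN : j' < N0 t lam := by
          have := sig_le hp ht (lam := lam); omega
        exact ⟨(sig_iff hp ht j' hjN).mpr hj', bfun_mem hp ht hjN⟩
    have h2 : ((Finset.range (sig t lam)).image (bfun t lam)).card = sig t lam := by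
      rw [Finset.card_image_of_injOn, Finset.card_range]
      intro a ha b hb hab
      simp only [Finset.coe_range, Set.mem_Iio] at ha hb
      have hsl := sig_le hp ht (lam := lam)
      by_contra hne
      rcases Nat.lt_or_ge a b with h | h
      · have := bfun_strictmono hp ht h (by omega); omega
      · have : b < a := by omega
        have := bfun_strictmono hp ht this (by omega); omega
    have h3 := Finset.card_filter_add_card_filter_not
      (s := Finset.range (N0 t lam)) (p := fun x => x ∈ Tset t lam)
    rw [h1, h2] at h3
    rw [Finset.card_range] at h3
    have : A.card = N0 t lam - sig t lam := by
      rw [hA]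
      omega
    rw [this, kk]
  set C := (Finset.range (N0 t lam)).filter (fun j => gfun t lam j < N0 t lam) with hC
  have hCdc : ∀ i ∈ C, ∀ i' ≤ i, i' ∈ C := by
    intro i hi i' hi'
    simp only [hC, Finset.mem_filter, Finset.mem_range] at hi ⊢
    rcases Nat.eq_or_lt_of_le hi' with h | h
    · subst h; exact hi
    · have := gfun_strictmono hp ht h (lam := lam)
      exact ⟨by omega, by omega⟩
  have hCcard : C.card = kk t lam := by
    rw [← hAcard]
    apply Finset.card_nbij (i := gfun t lam)
    · intro j hj
      simp only [hC, Finset.mem_coe, Finset.mem_filter, Finset.mem_range] at hj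
      simp only [hA, Finset.mem_coe, Finset.mem_filter, Finset.mem_range]
      exact ⟨hj.2, gfun_not_mem hp ht j⟩
    · intro a ha b hb hab
      simp only [hC, Finset.coe_filter] at ha hb
      by_contra hne
      rcases Nat.lt_or_ge a b with h | h
      · have := gfun_strictmono hp ht h (lam := lam); omega
      · have : b < a := by omega
        have := gfun_strictmono hp ht this (lam := lam); omega
    · intro x hx
      simp only [hA, Finset.mem_coe, Finset.mem_filter, Finset.mem_range] at hx
      obtain ⟨j, hj⟩ := gfun_surj hp ht hx.2
      refine ⟨j, ?_, hj⟩
      simp only [hC, Finset.coe_filter, Set.mem_setOf_eq, Finset.mem_range]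
      have : j ≤ gfun t lam j := by rw [gfun]; omega
      exact ⟨by omega, by omega⟩
  have hmem := mem_downclosed_iff C hCdc j
  rw [hCcard] at hmem
  simp only [hC, Finset.mem_filter, Finset.mem_range] at hmem
  constructor
  · intro h
    have : j ≤ gfun t lam j := by rw [gfun]; omega
    exact hmem.mp ⟨by omega, h⟩
  · intro h
    exact (hmem.mpr h).2

end Mu

def Gprop (t : ℕ) (lam : ℕ → ℕ) (z : ℤ) : Prop :=
  (∀ u ∈ Tset t lam, N0 t lam ≤ u →
      0 ≤ 2 * (N0 t lam : ℤ) - 1 - z - u ∧ 2 * (N0 t lam : ℤ) - 1 - z - u < N0 t lam ∧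
        (2 * (N0 t lam : ℤ) - 1 - z - u).toNat ∉ Tset t lam) ∧
  (∀ x : ℕ, x < N0 t lam → x ∉ Tset t lam →
      (N0 t lam : ℤ) ≤ 2 * (N0 t lam : ℤ) - 1 - z - x ∧
        (2 * (N0 t lam : ℤ) - 1 - z - x).toNat ∈ Tset t lam)

section GG

variable (hp : IsPartition lam) (ht : 0 < t)
include hp ht

lemma star_iff_G (z : ℤ) :
    (∀ i < kk t lam, (gfun t lam i : ℤ) =
        2 * (N0 t lam : ℤ) - 1 - z - bfun t lam (N0 t lam - 1 - i)) ↔ Gprop t lam z := by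
  have hkle : kk t lam ≤ N0 t lam := by rw [kk]; omega
  have hsigkk : sig t lam + kk t lam = N0 t lam ∨ (kk t lam = 0 ∧ sig t lam = N0 t lam) := by
    have := sig_le hp ht (lam := lam); rw [kk]; omega
  constructor
  · intro hstar
    constructor
    · intro u hu huN
      obtain ⟨j', hj', rfl⟩ := bfun_surj hp ht hu
      have hjsig : sig t lam ≤ j' := by
        by_contra hc
        push_neg at hc
        have := (sig_iff hp ht j' hj').mpr hc
        omega
      set i := N0 t lam - 1 - j' with hi
      have hik : i < kk t lam := by rw [kk]; omega
      have hj'eq : N0 t lam - 1 - i = j' := by omega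
      have h1 := hstar i hik
      rw [hj'eq] at h1
      refine ⟨by omega, ?_, ?_⟩
      · have h2 := (gfun_lt_iff hp ht i).mpr hik
        omega
      · have h3 : (2 * (N0 t lam : ℤ) - 1 - z - bfun t lam j').toNat = gfun t lam i := by
          omega
        rw [h3]
        exact gfun_not_mem hp ht i
    · intro x hxN hx
      obtain ⟨j, rfl⟩ := gfun_surj hp ht hx
      have hjk : j < kk t lam := (gfun_lt_iff hp ht j).mp hxN
      have h1 := hstar j hjk
      have hj'N : N0 t lam - 1 - j < N0 t lam := by omega
      have hjsig : sig t lam ≤ N0 t lam - 1 - j := by omega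
      have hbge : N0 t lam ≤ bfun t lam (N0 t lam - 1 - j) := by
        by_contra hc
        push_neg at hc
        have := (sig_iff hp ht _ hj'N).mp hc
        omega
      refine ⟨by omega, ?_⟩
      have h3 : (2 * (N0 t lam : ℤ) - 1 - z - gfun t lam j).toNat
          = bfun t lam (N0 t lam - 1 - j) := by omega
      rw [h3]
      exact bfun_mem hp ht hj'N
  · intro hG
    have key := strictmono_image_eq (kk t lam) (gfun t lam)
      (fun i => (2 * (N0 t lam : ℤ) - 1 - z - bfun t lam (N0 t lam - 1 - i)).toNat)
      ?_ ?_ ?_ ?_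
    · intro i hik
      have h0 := key i hik
      -- need nonneg of the ℤ value
      have hj'N : N0 t lam - 1 - i < N0 t lam := by omega
      have hbmem := bfun_mem hp ht hj'N
      have hbge : N0 t lam ≤ bfun t lam (N0 t lam - 1 - i) := by
        by_contra hc
        push_neg at hc
        have := (sig_iff hp ht _ hj'N).mp hc
        omega
      have hGa := hG.1 _ hbmem hbge
      omega
    · intro i j hij hj
      exact gfun_strictmono hp ht hij
    · intro i j hij hjk
      -- strict mono of reflected bfun
      have hi' : N0 t lam - 1 - i < N0 t lam := by omega
      have hj' : N0 t lam - 1 - j < N0 t lam := by omega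
      have hb := bfun_strictmono hp ht (show N0 t lam - 1 - j < N0 t lam - 1 - i by omega) hi'
      have hbgei : N0 t lam ≤ bfun t lam (N0 t lam - 1 - i) := by
        by_contra hc
        push_neg at hc
        have := (sig_iff hp ht _ hi').mp hc
        omega
      have hbgej : N0 t lam ≤ bfun t lam (N0 t lam - 1 - j) := by
        by_contra hc
        push_neg at hc
        have := (sig_iff hp ht _ hj').mp hc
        omega
      have hGai := hG.1 _ (bfun_mem hp ht hi') hbgei
      have hGaj := hG.1 _ (bfun_mem hp ht hj') hbgej
      show (2 * (N0 t lam : ℤ) - 1 - z - bfun t lam (N0 t lam - 1 - i)).toNat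
        < (2 * (N0 t lam : ℤ) - 1 - z - bfun t lam (N0 t lam - 1 - j)).toNat
      omega
    · -- every gfun i is some reflected value
      intro i hik
      have hgN := (gfun_lt_iff hp ht i).mpr hik
      have hGb := hG.2 _ hgN (gfun_not_mem hp ht i)
      obtain ⟨j'', hj''N, hb⟩ := bfun_surj hp ht hGb.2
      have hbge : N0 t lam ≤ bfun t lam j'' := by
        rw [hb]; omega
      have hjsig : sig t lam ≤ j'' := by
        by_contra hc
        push_neg at hc
        have := (sig_iff hp ht j'' hj''N).mpr hc
        omega
      refine ⟨N0 t lam - 1 - j'', by rw [kk]; omega, ?_⟩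
      have hrw : N0 t lam - 1 - (N0 t lam - 1 - j'') = j'' := by omega
      show gfun t lam i = (2 * (N0 t lam : ℤ) - 1 - z -
        bfun t lam (N0 t lam - 1 - (N0 t lam - 1 - j''))).toNat
      rw [hrw]
      omega
    · -- every reflected value is some gfun
      intro j hjk
      have hj' : N0 t lam - 1 - j < N0 t lam := by omega
      have hbgej : N0 t lam ≤ bfun t lam (N0 t lam - 1 - j) := by
        by_contra hc
        push_neg at hc
        have := (sig_iff hp ht _ hj').mp hc
        omega
      have hGa := hG.1 _ (bfun_mem hp ht hj') hbgej
      obtain ⟨i, hgi⟩ := gfun_surj hp ht hGa.2.2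
      refine ⟨i, ?_, ?_⟩
      · rw [← gfun_lt_iff hp ht]
        omega
      · show (2 * (N0 t lam : ℤ) - 1 - z - bfun t lam (N0 t lam - 1 - j)).toNat
          = gfun t lam i
        omega

end GG

def n0 (lam : ℕ → ℕ) : ℕ := plen lam + 1

def mm (t : ℕ) (lam : ℕ → ℕ) (r : ℕ) : ℕ := mr t lam (N0 t lam) r

def pairR (t : ℕ) (z : ℤ) (r : ℕ) : ℕ := (((t : ℤ) - 1 - z - r) % t).toNat

def epsR (t : ℕ) (z : ℤ) (r : ℕ) : ℤ := ((r : ℤ) + pairR t z r + z + 1) / t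

section Eps

variable {z : ℤ} (ht : 0 < t)
include ht

lemma pairR_cast (r : ℕ) : (pairR t z r : ℤ) = ((t : ℤ) - 1 - z - r) % t := by
  rw [pairR, Int.toNat_of_nonneg]
  exact Int.emod_nonneg _ (by exact_mod_cast ht.ne')

lemma pairR_lt (r : ℕ) : pairR t z r < t := by
  have h := Int.emod_lt_of_pos ((t : ℤ) - 1 - z - r) (show (0:ℤ) < t by exact_mod_cast ht)
  have h2 := pairR_cast (z := z) ht r
  omega

lemma epsR_mul (r : ℕ) : epsR t z r * t = (r : ℤ) + pairR t z r + z + 1 := by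
  have htz : (t : ℤ) ≠ 0 := by exact_mod_cast ht.ne'
  have h1 : (pairR t z r : ℤ) = ((t:ℤ) - 1 - z - r) - t * (((t:ℤ) - 1 - z - r) / t) := by
    rw [pairR_cast ht, Int.emod_def]
  set q := ((t:ℤ) - 1 - z - r) / t with hq
  have h2 : (r : ℤ) + pairR t z r + z + 1 = t * (1 - q) := by rw [h1]; ring
  rw [epsR, h2, Int.mul_ediv_cancel_left _ htz]
  ring

lemma epsR_nonneg (hz1 : -1 ≤ z) (r : ℕ) : 0 ≤ epsR t z r := by
  have h := epsR_mul (z := z) ht r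
  have hp : (0:ℤ) ≤ pairR t z r := by positivity
  have htz : (0:ℤ) < t := by exact_mod_cast ht
  nlinarith

lemma epsR_le_two (hz2 : z ≤ (t:ℤ) - 1) {r : ℕ} (hr : r < t) : epsR t z r ≤ 2 := by
  have h := epsR_mul (z := z) ht r
  have hp := pairR_lt (z := z) ht r
  have htz : (0:ℤ) < t := by exact_mod_cast ht
  have hrz : (r:ℤ) ≤ (t:ℤ) - 1 := by omega
  have hpz : (pairR t z r : ℤ) ≤ (t:ℤ) - 1 := by omega
  nlinarith

lemma pairR_pairR {r : ℕ} (hr : r < t) : pairR t z (pairR t z r) = r := by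
  have h := epsR_mul (z := z) ht r
  have htz : (0:ℤ) < t := by exact_mod_cast ht
  have h1 : (t:ℤ) - 1 - z - pairR t z r = r + (1 - epsR t z r) * t := by
    have : (pairR t z r : ℤ) = epsR t z r * t - r - z - 1 := by omega
    rw [this]; ring
  have h2 : ((t:ℤ) - 1 - z - pairR t z r) % t = r := by
    rw [h1]
    rw [Int.add_mul_emod_self_right]
    exact Int.emod_eq_of_lt (by positivity) (by exact_mod_cast hr)
  rw [pairR, h2]
  exact Int.toNat_natCast r

lemma epsR_pairR {r : ℕ} (hr : r < t) : epsR t z (pairR t z r) = epsR t z r := by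
  have h1 := epsR_mul (z := z) ht r
  have h2 := epsR_mul (z := z) ht (pairR t z r)
  rw [pairR_pairR ht hr] at h2
  have htz : (0:ℤ) < t := by exact_mod_cast ht
  have : epsR t z (pairR t z r) * t = epsR t z r * t := by omega
  exact mul_right_cancel₀ (by omega) this

end Eps

def Hr (t : ℕ) (lam : ℕ → ℕ) (z : ℤ) (r : ℕ) : Prop :=
  ((n0 lam : ℤ) + 1 ≤ mm t lam r →
      1 ≤ epsR t z r ∧
        (mm t lam r : ℤ) + mm t lam (pairR t z r) ≤ 2 * n0 lam + 1 - epsR t z r) ∧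
  ((mm t lam r : ℤ) ≤ (n0 lam : ℤ) - 1 →
      epsR t z r ≤ 1 ∧
        2 * (n0 lam : ℤ) + 1 - epsR t z r ≤ (mm t lam r : ℤ) + mm t lam (pairR t z r))


lemma N0_eq : N0 t lam = t * n0 lam := rfl

section GH

variable {z : ℤ} (ht : 0 < t)
include ht

lemma mem_Tset_q {q r u : ℕ} (hr : r < t) (hu : u = q * t + r) :
    u ∈ Tset t lam ↔ q < mm t lam r := by
  have hmod : u % t = r := by
    rw [hu, Nat.mul_comm, Nat.mul_add_mod]
    exact Nat.mod_eq_of_lt hr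
  rw [mem_Tset ht, hmod, ← mm]
  constructor
  · intro h
    by_contra hc
    push_neg at hc
    have : t * mm t lam r ≤ q * t := by
      rw [Nat.mul_comm]; exact Nat.mul_le_mul_right t hc
    omega
  · intro h
    have : (q + 1) * t ≤ mm t lam r * t := Nat.mul_le_mul_right t h
    nlinarith

lemma toNat_dec {q p v : ℤ} (hq : 0 ≤ q) (hpl : 0 ≤ p) (hpt : p < t)
    (hv : v = q * t + p) :
    (v.toNat : ℤ) = v ∧ ((v.toNat % t : ℕ) : ℤ) = p ∧ ((v.toNat / t : ℕ) : ℤ) = q := by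
  have htz : (0:ℤ) < t := by exact_mod_cast ht
  have hv0 : 0 ≤ v := by nlinarith
  have h1 : (v.toNat : ℤ) = v := Int.toNat_of_nonneg hv0
  have h2 : v.toNat = q.toNat * t + p.toNat := by
    have hqq : (q.toNat : ℤ) = q := Int.toNat_of_nonneg hq
    have hpp : (p.toNat : ℤ) = p := Int.toNat_of_nonneg hpl
    have : ((q.toNat * t + p.toNat : ℕ) : ℤ) = v := by push_cast; rw [hqq, hpp]; omega
    omega
  have hptn : p.toNat < t := by omega
  have h3 : v.toNat % t = p.toNat := by
    rw [h2, Nat.mul_comm, Nat.mul_add_mod]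
    exact Nat.mod_eq_of_lt hptn
  have h4 : v.toNat / t = q.toNat := by
    rw [h2, Nat.mul_comm q.toNat t, Nat.mul_add_div ht, Nat.div_eq_of_lt hptn]
    omega
  refine ⟨h1, by rw [h3]; omega, by rw [h4]; omega⟩

set_option maxHeartbeats 1000000 in
lemma G_iff_Hall (hz1 : -1 ≤ z) (hz2 : z ≤ (t:ℤ) - 1) :
    Gprop t lam z ↔ ∀ r < t, Hr t lam z r := by
  have htz : (0:ℤ) < t := by exact_mod_cast ht
  constructor
  · intro hG r hr
    have hpnn : (0:ℤ) ≤ pairR t z r := by positivity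
    have hplt := pairR_lt (z := z) ht r
    have hpltz : (pairR t z r : ℤ) < t := by exact_mod_cast hplt
    have hepsm := epsR_mul (z := z) ht r
    constructor
    · intro hmge
      have hmge' : n0 lam + 1 ≤ mm t lam r := by exact_mod_cast hmge
      -- first test element u1 = n0 * t + r
      have hu1T : n0 lam * t + r ∈ Tset t lam := (mem_Tset_q ht hr rfl).mpr (by omega)
      have hu1N : N0 t lam ≤ n0 lam * t + r := by rw [N0_eq, Nat.mul_comm]; omega
      obtain ⟨hv1a, hv1b, hv1c⟩ := hG.1 _ hu1T hu1N
      have hid1 : 2 * (N0 t lam : ℤ) - 1 - z - (n0 lam * t + r : ℕ)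
          = ((n0 lam : ℤ) - epsR t z r) * t + pairR t z r := by
        rw [N0_eq]; push_cast; linear_combination hepsm
      have heps1 : 1 ≤ epsR t z r := by
        rw [hid1] at hv1b
        rw [N0_eq] at hv1b
        push_cast at hv1b
        nlinarith
      refine ⟨heps1, ?_⟩
      -- second test element u2 = (mm r - 1) * t + r
      set k2 := mm t lam r - 1 with hk2def
      have hk2 : k2 + 1 = mm t lam r := by omega
      have hu2T : k2 * t + r ∈ Tset t lam := (mem_Tset_q ht hr rfl).mpr (by omega)
      have hu2N : N0 t lam ≤ k2 * t + r := by
        rw [N0_eq]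
        have : n0 lam * t ≤ k2 * t := Nat.mul_le_mul_right t (by omega)
        rw [Nat.mul_comm] at this
        omega
      obtain ⟨hv2a, hv2b, hv2c⟩ := hG.1 _ hu2T hu2N
      have hid2 : 2 * (N0 t lam : ℤ) - 1 - z - (k2 * t + r : ℕ)
          = (2 * (n0 lam : ℤ) - k2 - epsR t z r) * t + pairR t z r := by
        rw [N0_eq]; push_cast; linear_combination hepsm
      have hQ2 : 0 ≤ 2 * (n0 lam : ℤ) - k2 - epsR t z r := by
        rw [hid2] at hv2a
        nlinarith
      obtain ⟨hw1, hw2, hw3⟩ := toNat_dec ht hQ2 hpnn hpltz hid2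
      rw [mem_Tset ht] at hv2c
      push_neg at hv2c
      have hwmod : (2 * (N0 t lam : ℤ) - 1 - z - (k2 * t + r : ℕ)).toNat % t
          = pairR t z r := by omega
      rw [hwmod] at hv2c
      have hfin : (mm t lam (pairR t z r) : ℤ) ≤ 2 * (n0 lam : ℤ) - k2 - epsR t z r := by
        have hcast : (t * mm t lam (pairR t z r) : ℕ) ≤ (2 * (N0 t lam:ℤ) - 1 - z - (k2 * t + r : ℕ)).toNat := hv2c
        have : (t : ℤ) * mm t lam (pairR t z r)
            ≤ (2 * (n0 lam : ℤ) - k2 - epsR t z r) * t + pairR t z r := by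
          have := hcast
          push_cast at this
          omega
        nlinarith
      omega
    · intro hmle
      have hmle' : mm t lam r ≤ n0 lam - 1 := by
        have hn1 : 1 ≤ n0 lam := by rw [n0]; omega
        omega
      have hn1 : 1 ≤ n0 lam := by rw [n0]; omega
      -- first test x2 = (n0 - 1) * t + r  (not in T, below N0)
      set k0 := n0 lam - 1 with hk0def
      have hk0 : k0 + 1 = n0 lam := by omega
      have hx2T : k0 * t + r ∉ Tset t lam := by
        rw [mem_Tset_q ht hr rfl]
        omega
      have hx2N : k0 * t + r < N0 t lam := by
        rw [N0_eq, Nat.mul_comm t (n0 lam)]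
        have h6 : (k0 + 1) * t ≤ n0 lam * t := Nat.mul_le_mul_right t (by omega)
        rw [Nat.succ_mul] at h6
        omega
      obtain ⟨hv2a, hv2b⟩ := hG.2 _ hx2N hx2T
      have hid2 : 2 * (N0 t lam : ℤ) - 1 - z - (k0 * t + r : ℕ)
          = ((n0 lam : ℤ) + 1 - epsR t z r) * t + pairR t z r := by
        rw [N0_eq]
        push_cast
        have hk0z : (k0 : ℤ) = (n0 lam : ℤ) - 1 := by omega
        rw [hk0z]
        linear_combination hepsm
      have heps2 : epsR t z r ≤ 1 := by
        rw [hid2, N0_eq] at hv2a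
        push_cast at hv2a
        nlinarith
      refine ⟨heps2, ?_⟩
      -- second test x1 = mm r * t + r
      have hx1T : mm t lam r * t + r ∉ Tset t lam := by
        rw [mem_Tset_q ht hr rfl]
        omega
      have hx1N : mm t lam r * t + r < N0 t lam := by
        rw [N0_eq, Nat.mul_comm t (n0 lam)]
        have h5 : (mm t lam r + 1) * t ≤ n0 lam * t := Nat.mul_le_mul_right t (by omega)
        rw [Nat.succ_mul] at h5
        omega
      obtain ⟨hv1a, hv1b⟩ := hG.2 _ hx1N hx1T
      have hid1 : 2 * (N0 t lam : ℤ) - 1 - z - (mm t lam r * t + r : ℕ)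
          = (2 * (n0 lam : ℤ) - mm t lam r - epsR t z r) * t + pairR t z r := by
        rw [N0_eq]; push_cast; linear_combination hepsm
      have hQ1 : 0 ≤ 2 * (n0 lam : ℤ) - mm t lam r - epsR t z r := by
        have : (0:ℤ) ≤ 2 * (N0 t lam : ℤ) - 1 - z - (mm t lam r * t + r : ℕ) := by
          rw [N0_eq] at hv1a ⊢
          push_cast at hv1a ⊢
          omega
        rw [hid1] at this
        nlinarith
      obtain ⟨hw1, hw2, hw3⟩ := toNat_dec ht hQ1 hpnn hpltz hid1
      rw [mem_Tset ht] at hv1b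
      have hwmod : (2 * (N0 t lam : ℤ) - 1 - z - (mm t lam r * t + r : ℕ)).toNat % t
          = pairR t z r := by omega
      rw [hwmod] at hv1b
      have hfin : 2 * (n0 lam : ℤ) - mm t lam r - epsR t z r < mm t lam (pairR t z r) := by
        have : ((2 * (N0 t lam : ℤ) - 1 - z - (mm t lam r * t + r : ℕ)).toNat : ℤ)
            < (t : ℤ) * mm t lam (pairR t z r) := by exact_mod_cast hv1b
        rw [hw1, hid1] at this
        nlinarith
      omega
  · intro hH
    constructor
    · intro u huT huN
      set r := u % t with hrdef
      have hr : r < t := Nat.mod_lt u ht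
      set q := u / t with hqdef
      have hqu : u = q * t + r := by
        rw [hrdef, hqdef, Nat.mul_comm]
        exact (Nat.div_add_mod u t).symm
      have hq : n0 lam ≤ q := by
        rw [N0_eq] at huN
        by_contra hc
        push_neg at hc
        have h7 : (q + 1) * t ≤ n0 lam * t := Nat.mul_le_mul_right t (by omega)
        rw [Nat.succ_mul] at h7
        rw [Nat.mul_comm t (n0 lam)] at huN
        omega
      have hqm : q < mm t lam r := (mem_Tset_q ht hr hqu).mp huT
      have hHr := (hH r hr).1 (by exact_mod_cast (show n0 lam + 1 ≤ mm t lam r by omega))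
      obtain ⟨heps, hsum⟩ := hHr
      have hpnn : (0:ℤ) ≤ pairR t z r := by positivity
      have hplt := pairR_lt (z := z) ht r
      have hpltz : (pairR t z r : ℤ) < t := by exact_mod_cast hplt
      have hepsm := epsR_mul (z := z) ht r
      have hid : 2 * (N0 t lam : ℤ) - 1 - z - u
          = (2 * (n0 lam : ℤ) - q - epsR t z r) * t + pairR t z r := by
        rw [N0_eq, hqu]; push_cast; linear_combination hepsm
      have hQge : (mm t lam (pairR t z r) : ℤ) ≤ 2 * (n0 lam : ℤ) - q - epsR t z r := by
        omega
      have hQnn : 0 ≤ 2 * (n0 lam : ℤ) - q - epsR t z r := by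
        have : (0:ℤ) ≤ (mm t lam (pairR t z r) : ℤ) := by positivity
        omega
      refine ⟨?_, ?_, ?_⟩
      · rw [hid]; nlinarith
      · rw [hid, N0_eq]
        push_cast
        have hQle : 2 * (n0 lam : ℤ) - q - epsR t z r ≤ (n0 lam : ℤ) - 1 := by omega
        nlinarith
      · obtain ⟨hw1, hw2, hw3⟩ := toNat_dec ht hQnn hpnn hpltz hid
        rw [mem_Tset ht]
        push_neg
        have hwmod : (2 * (N0 t lam : ℤ) - 1 - z - u).toNat % t = pairR t z r := by omega
        rw [hwmod]
        have : (t : ℤ) * mm t lam (pairR t z r)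
            ≤ ((2 * (N0 t lam : ℤ) - 1 - z - u).toNat : ℤ) := by
          rw [hw1, hid]
          nlinarith
        exact_mod_cast this
    · intro x hxN hxT
      set r := x % t with hrdef
      have hr : r < t := Nat.mod_lt x ht
      set q := x / t with hqdef
      have hqu : x = q * t + r := by
        rw [hrdef, hqdef, Nat.mul_comm]
        exact (Nat.div_add_mod x t).symm
      have hq : q ≤ n0 lam - 1 := by
        rw [N0_eq, Nat.mul_comm] at hxN
        by_contra hc
        push_neg at hc
        have : n0 lam * t ≤ q * t := Nat.mul_le_mul_right t (by omega)
        omega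
      have hn1 : 1 ≤ n0 lam := by rw [n0]; omega
      have hqm : mm t lam r ≤ q := by
        by_contra hc
        push_neg at hc
        exact hxT ((mem_Tset_q ht hr hqu).mpr hc)
      have hHr := (hH r hr).2 (by
        have : mm t lam r ≤ n0 lam - 1 := by omega
        exact_mod_cast (show (mm t lam r : ℤ) ≤ (n0 lam : ℤ) - 1 by
          have h6 : (mm t lam r : ℤ) ≤ ((n0 lam - 1 : ℕ) : ℤ) := by exact_mod_cast this
          omega))
      obtain ⟨heps, hsum⟩ := hHr
      have hpnn : (0:ℤ) ≤ pairR t z r := by positivity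
      have hplt := pairR_lt (z := z) ht r
      have hpltz : (pairR t z r : ℤ) < t := by exact_mod_cast hplt
      have hepsm := epsR_mul (z := z) ht r
      have hid : 2 * (N0 t lam : ℤ) - 1 - z - x
          = (2 * (n0 lam : ℤ) - q - epsR t z r) * t + pairR t z r := by
        rw [N0_eq, hqu]; push_cast; linear_combination hepsm
      have hQlt : 2 * (n0 lam : ℤ) - q - epsR t z r < mm t lam (pairR t z r) := by omega
      have hQge : (n0 lam : ℤ) ≤ 2 * (n0 lam : ℤ) - q - epsR t z r := by omega
      have hQnn : 0 ≤ 2 * (n0 lam : ℤ) - q - epsR t z r := by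
        have : (0:ℤ) ≤ (n0 lam : ℤ) := by positivity
        omega
      refine ⟨?_, ?_⟩
      · rw [hid, N0_eq]
        push_cast
        nlinarith
      · obtain ⟨hw1, hw2, hw3⟩ := toNat_dec ht hQnn hpnn hpltz hid
        rw [mem_Tset ht]
        have hwmod : (2 * (N0 t lam : ℤ) - 1 - z - x).toNat % t = pairR t z r := by omega
        rw [hwmod]
        have : ((2 * (N0 t lam : ℤ) - 1 - z - x).toNat : ℤ)
            < (t : ℤ) * mm t lam (pairR t z r) := by
          rw [hw1, hid]
          nlinarith
        exact_mod_cast this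

end GH

section HD

variable {z : ℤ} (ht : 0 < t) (hz1 : -1 ≤ z) (hz2 : z ≤ (t:ℤ) - 1)
include ht hz1 hz2

lemma block_iff {r : ℕ} (hr : r < t) :
    (t:ℤ) - z ≤ r ↔ epsR t z r = 2 := by
  have htz : (0:ℤ) < t := by exact_mod_cast ht
  have hem := epsR_mul (z := z) ht r
  have hple := pairR_lt (z := z) ht r
  have hplez : (pairR t z r : ℤ) < t := by exact_mod_cast hple
  have hpnn : (0:ℤ) ≤ pairR t z r := by positivity
  have he0 := epsR_nonneg ht hz1 r
  have he2 := epsR_le_two ht hz2 hr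
  constructor
  · intro h
    by_contra hc
    have he1 : epsR t z r ≤ 1 := by omega
    nlinarith
  · intro h
    rw [h] at hem
    omega

lemma Hall_nonblock (hH : ∀ r < t, Hr t lam z r) {r : ℕ} (hr : r < t)
    (he : epsR t z r ≤ 1) :
    (mm t lam r : ℤ) + mm t lam (pairR t z r) = 2 * n0 lam := by
  have htz : (0:ℤ) < t := by exact_mod_cast ht
  set s := pairR t z r with hs
  show (mm t lam r : ℤ) + mm t lam s = 2 * n0 lam
  have hslt := pairR_lt (z := z) ht r
  have hps : pairR t z s = r := pairR_pairR ht hr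
  have hes : epsR t z s = epsR t z r := epsR_pairR ht hr
  have he0 := epsR_nonneg ht hz1 r
  obtain ⟨h1r, h2r⟩ := hH r hr
  obtain ⟨h1s, h2s⟩ := hH s hslt
  rw [hps, hes] at h1s h2s
  rw [← hs] at h1r h2r
  have he00 : epsR t z r = 0 → mm t lam s = mm t lam r := by
    intro h0
    have hem := epsR_mul (z := z) ht r
    rw [h0] at hem
    have hr0 : r = 0 := by omega
    have hs0 : s = 0 := by omega
    rw [hr0, hs0]
  rcases Nat.lt_trichotomy (mm t lam r) (n0 lam) with hlt | heq | hgt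
  · have hltz : (mm t lam r : ℤ) < n0 lam := by exact_mod_cast hlt
    obtain ⟨hA, hB2⟩ := h2r (by omega)
    rcases Int.lt_or_le (epsR t z r) 1 with he0' | he1'
    · have hez : epsR t z r = 0 := by omega
      have := he00 hez
      omega
    · have he1 : epsR t z r = 1 := by omega
      have hms : (n0 lam : ℤ) + 1 ≤ mm t lam s := by omega
      obtain ⟨hC, hD2⟩ := h1s hms
      omega
  · have heqz : (mm t lam r : ℤ) = n0 lam := by exact_mod_cast heq
    rcases Nat.lt_trichotomy (mm t lam s) (n0 lam) with hslt' | hseq | hsgt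
    · have hsltz : (mm t lam s : ℤ) < n0 lam := by exact_mod_cast hslt'
      obtain ⟨hA, hB2⟩ := h2s (by omega)
      omega
    · have : (mm t lam s : ℤ) = n0 lam := by exact_mod_cast hseq
      omega
    · have hsgtz : (n0 lam : ℤ) < mm t lam s := by exact_mod_cast hsgt
      obtain ⟨hA, hB2⟩ := h1s (by omega)
      omega
  · have hgtz : (n0 lam : ℤ) < mm t lam r := by exact_mod_cast hgt
    obtain ⟨hA, hB2⟩ := h1r (by omega)
    have he1 : epsR t z r = 1 := by omega
    have hms : (mm t lam s : ℤ) ≤ (n0 lam : ℤ) - 1 := by omega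
    obtain ⟨hC, hD2⟩ := h2s hms
    omega

lemma Hall_iff_D (hp : IsPartition lam) :
    (∀ r < t, Hr t lam z r) ↔
      ((∀ r < t, (r:ℤ) ≤ (t:ℤ) - 1 - z →
          (mm t lam r : ℤ) + mm t lam (pairR t z r) = 2 * n0 lam) ∧
        (∀ r < t, (t:ℤ) - z ≤ r → mm t lam r = n0 lam)) := by
  classical
  have htz : (0:ℤ) < t := by exact_mod_cast ht
  have hsum : ∑ r ∈ Finset.range t, mm t lam r = t * n0 lam := by
    have := sum_mr hp (N0 t lam) ht
    rw [N0_eq] at this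
    exact this
  have hnbiff : ∀ r : ℕ, r < t → ((r:ℤ) ≤ (t:ℤ) - 1 - z ↔ epsR t z r ≤ 1) := by
    intro r hr
    have hb := block_iff ht hz1 hz2 hr
    have he2 := epsR_le_two ht hz2 hr
    have he0 := epsR_nonneg ht hz1 r
    constructor
    · intro h
      by_contra hc
      have h4 : epsR t z r = 2 := by omega
      have := hb.mpr h4
      omega
    · intro h
      by_contra hc
      have : epsR t z r = 2 := hb.mp (by omega)
      omega
  constructor
  · intro hH
    have hnb : ∀ r < t, (r:ℤ) ≤ (t:ℤ) - 1 - z →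
        (mm t lam r : ℤ) + mm t lam (pairR t z r) = 2 * n0 lam := by
      intro r hr hrz
      exact Hall_nonblock ht hz1 hz2 hH hr ((hnbiff r hr).mp hrz)
    refine ⟨hnb, ?_⟩
    set B := (Finset.range t).filter (fun r : ℕ => (t:ℤ) - z ≤ (r:ℤ)) with hB
    have hmemB : ∀ r, r ∈ B ↔ (r < t ∧ (t:ℤ) - z ≤ r) := by
      intro r
      rw [hB]
      simp [Finset.mem_filter, Finset.mem_range]
    have hpairB : ∀ r ∈ B, pairR t z r ∈ B := by
      intro r hrB
      rw [hmemB] at hrB ⊢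
      obtain ⟨hr, hrz⟩ := hrB
      have he22 : epsR t z r = 2 := (block_iff ht hz1 hz2 hr).mp hrz
      have hplt := pairR_lt (z := z) ht r
      refine ⟨hplt, ?_⟩
      rw [block_iff ht hz1 hz2 hplt, epsR_pairR ht hr]
      exact he22
    have hpairinv : ∀ r ∈ B, pairR t z (pairR t z r) = r := by
      intro r hrB
      rw [hmemB] at hrB
      exact pairR_pairR ht hrB.1
    have hsumpair : ∑ r ∈ B, mm t lam (pairR t z r) = ∑ r ∈ B, mm t lam r := by
      exact Finset.sum_nbij' (i := pairR t z) (j := pairR t z) hpairB hpairB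
        hpairinv hpairinv (fun a _ => rfl)
    set NB := (Finset.range t).filter (fun r : ℕ => ¬ ((t:ℤ) - z ≤ (r:ℤ))) with hNB
    have hmemNB : ∀ r, r ∈ NB ↔ (r < t ∧ ¬ ((t:ℤ) - z ≤ r)) := by
      intro r
      rw [hNB]
      simp [Finset.mem_filter, Finset.mem_range]
    have hpairNB : ∀ r ∈ NB, pairR t z r ∈ NB := by
      intro r hrNB
      rw [hmemNB] at hrNB ⊢
      obtain ⟨hr, hrz⟩ := hrNB
      have hplt := pairR_lt (z := z) ht r
      refine ⟨hplt, ?_⟩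
      rw [block_iff ht hz1 hz2 hplt, epsR_pairR ht hr]
      intro hcon
      exact hrz ((block_iff ht hz1 hz2 hr).mpr hcon)
    have hpairinvNB : ∀ r ∈ NB, pairR t z (pairR t z r) = r := by
      intro r hrNB
      rw [hmemNB] at hrNB
      exact pairR_pairR ht hrNB.1
    have hsumpairNB : ∑ r ∈ NB, mm t lam (pairR t z r) = ∑ r ∈ NB, mm t lam r := by
      exact Finset.sum_nbij' (i := pairR t z) (j := pairR t z) hpairNB hpairNB
        hpairinvNB hpairinvNB (fun a _ => rfl)
    have hNBsum : ∑ r ∈ NB, (mm t lam r + mm t lam (pairR t z r))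
        = NB.card * (2 * n0 lam) := by
      rw [Finset.sum_congr rfl (g := fun _ => 2 * n0 lam) (fun r hrNB => by
        have hmem := (hmemNB r).mp hrNB
        have h9 := hnb r hmem.1 (by omega)
        exact_mod_cast h9), Finset.sum_const, smul_eq_mul]
    have hNBtot : ∑ r ∈ NB, mm t lam r = NB.card * n0 lam := by
      have h1 : ∑ r ∈ NB, (mm t lam r + mm t lam (pairR t z r))
          = ∑ r ∈ NB, mm t lam r + ∑ r ∈ NB, mm t lam (pairR t z r) :=
        Finset.sum_add_distrib
      have h2 : NB.card * (2 * n0 lam) = 2 * (NB.card * n0 lam) := by ring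
      omega
    have hsplit : ∑ r ∈ B, mm t lam r + ∑ r ∈ NB, mm t lam r = t * n0 lam := by
      rw [← hsum, hB, hNB]
      exact Finset.sum_filter_add_sum_filter_not (Finset.range t) _ _
    have hcards : B.card + NB.card = t := by
      have h5 := Finset.card_filter_add_card_filter_not
        (s := Finset.range t) (p := fun r : ℕ => (t:ℤ) - z ≤ (r:ℤ))
      rw [Finset.card_range] at h5
      rw [hB, hNB]
      exact h5
    have hBtot : ∑ r ∈ B, mm t lam r = B.card * n0 lam := by
      have h6 : t * n0 lam = B.card * n0 lam + NB.card * n0 lam := by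
        rw [← Nat.add_mul, hcards]
      omega
    have hBle : ∀ r ∈ B, mm t lam r + mm t lam (pairR t z r) ≤ 2 * n0 lam := by
      intro r hrB
      rw [hmemB] at hrB
      obtain ⟨hr, hrz⟩ := hrB
      have he22 : epsR t z r = 2 := (block_iff ht hz1 hz2 hr).mp hrz
      have hplt := pairR_lt (z := z) ht r
      have hps := pairR_pairR (z := z) ht hr
      have hes := epsR_pairR (z := z) ht hr
      obtain ⟨h1r, h2r⟩ := hH r hr
      obtain ⟨h1s, h2s⟩ := hH _ hplt
      rw [hps, hes] at h1s h2s
      rcases Nat.lt_or_ge (n0 lam) (mm t lam r) with hgt | hle1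
      · have hgtz : (n0 lam : ℤ) < mm t lam r := by exact_mod_cast hgt
        obtain ⟨hA, hB2⟩ := h1r (by omega)
        rw [he22] at hB2
        omega
      · rcases Nat.lt_or_ge (n0 lam) (mm t lam (pairR t z r)) with hgt2 | hle2
        · have hgtz : (n0 lam : ℤ) < mm t lam (pairR t z r) := by exact_mod_cast hgt2
          obtain ⟨hA, hB2⟩ := h1s (by omega)
          rw [he22] at hB2
          omega
        · omega
    have hBeq : ∀ r ∈ B, mm t lam r + mm t lam (pairR t z r) = 2 * n0 lam := by
      have h7 : ∑ r ∈ B, (mm t lam r + mm t lam (pairR t z r))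
          = ∑ _r ∈ B, 2 * n0 lam := by
        rw [Finset.sum_add_distrib, hsumpair, Finset.sum_const, smul_eq_mul]
        have h8 : B.card * (2 * n0 lam) = 2 * (B.card * n0 lam) := by ring
        omega
      exact (Finset.sum_eq_sum_iff_of_le hBle).mp h7
    intro r hr hrz
    have hrB : r ∈ B := (hmemB r).mpr ⟨hr, hrz⟩
    have hsum2 := hBeq r hrB
    have he22 : epsR t z r = 2 := (block_iff ht hz1 hz2 hr).mp hrz
    obtain ⟨h1r, h2r⟩ := hH r hr
    rcases Nat.lt_trichotomy (mm t lam r) (n0 lam) with hlt | heq | hgt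
    · have hltz : (mm t lam r : ℤ) < n0 lam := by exact_mod_cast hlt
      obtain ⟨hA, hB2⟩ := h2r (by omega)
      omega
    · exact heq
    · have hgtz : (n0 lam : ℤ) < mm t lam r := by exact_mod_cast hgt
      obtain ⟨hA, hB2⟩ := h1r (by omega)
      rw [he22] at hB2
      omega
  · intro hD r hr
    have he2 := epsR_le_two ht hz2 hr
    have he0 := epsR_nonneg ht hz1 r
    have hplt := pairR_lt (z := z) ht r
    rcases Int.lt_or_le 1 (epsR t z r) with hbig | hle
    · have he22 : epsR t z r = 2 := by omega
      have hrB : (t:ℤ) - z ≤ r := (block_iff ht hz1 hz2 hr).mpr he22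
      have hm := hD.2 r hr hrB
      constructor
      · intro hcon
        rw [hm] at hcon
        omega
      · intro hcon
        rw [hm] at hcon
        omega
    · have hrz : (r:ℤ) ≤ (t:ℤ) - 1 - z := (hnbiff r hr).mpr hle
      have hsum2 := hD.1 r hr hrz
      have he00 : epsR t z r = 0 → (mm t lam r : ℤ) = n0 lam := by
        intro h0
        have hem := epsR_mul (z := z) ht r
        rw [h0] at hem
        have hr0 : r = 0 := by omega
        have hs0 : pairR t z r = 0 := by omega
        rw [hs0] at hsum2
        rw [hr0] at hsum2 ⊢
        omega
      constructor
      · intro hge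
        refine ⟨?_, by omega⟩
        by_contra hc
        have h0 : epsR t z r = 0 := by omega
        have := he00 h0
        omega
      · intro hle2
        refine ⟨by omega, ?_⟩
        rcases Int.lt_or_le (epsR t z r) 1 with h0' | h1'
        · have h0 : epsR t z r = 0 := by omega
          have := he00 h0
          omega
        · omega

end HD

section Shift

variable (hp : IsPartition lam) (ht : 0 < t)
include hp ht

lemma betaSet_add : plen lam ≤ N → betaSet lam (N + t) =
    ((betaSet lam N).image (· + t)) ∪ Finset.range t := by
  intro hN
  ext x
  simp only [betaSet, Finset.mem_union, Finset.mem_image, Finset.mem_range]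
  constructor
  · rintro ⟨i, hi, rfl⟩
    rcases Nat.lt_or_ge i N with h | h
    · left
      exact ⟨lam i + (N - 1 - i), ⟨i, h, rfl⟩, by omega⟩
    · right
      have : lam i = 0 := plen_spec hp i (by omega)
      omega
  · rintro (⟨y, ⟨i, hi, rfl⟩, rfl⟩ | hx)
    · exact ⟨i, by omega, by omega⟩
    · refine ⟨N + t - 1 - x, by omega, ?_⟩
      have : lam (N + t - 1 - x) = 0 := plen_spec hp _ (by omega)
      omega

lemma mr_succ {N r : ℕ} (hN : plen lam ≤ N) (hr : r < t) :
    mr t lam (N + t) r = mr t lam N r + 1 := by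
  classical
  rw [mr, betaSet_add hp ht hN, Finset.filter_union, Finset.card_union_of_disjoint, Finset.filter_image]
  · have h1 : ((betaSet lam N).filter fun x => (x + t) % t = r).card = mr t lam N r := by
      rw [mr]
      congr 1
      apply Finset.filter_congr
      intro x _
      simp [Nat.add_mod_right]
    have h2 : ((Finset.range t).filter fun x => x % t = r).card = 1 := by
      have : (Finset.range t).filter (fun x => x % t = r) = {r} := by
        ext x
        simp only [Finset.mem_filter, Finset.mem_range, Finset.mem_singleton]
        constructor
        · rintro ⟨hx, hx2⟩
          rw [Nat.mod_eq_of_lt hx] at hx2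
          exact hx2
        · rintro rfl
          exact ⟨hr, Nat.mod_eq_of_lt hr⟩
      rw [this, Finset.card_singleton]
    rw [Finset.card_image_of_injective _ (fun a b hab => by omega), h1, h2]
  · rw [Finset.disjoint_left]
    intro a ha ha2
    simp only [Finset.filter_image, Finset.mem_image, Finset.mem_filter, Finset.mem_range] at ha ha2
    obtain ⟨y, _, rfl⟩ := ha
    omega

lemma mr_add {N r : ℕ} (hN : plen lam ≤ N) (hr : r < t) (b : ℕ) :
    mr t lam (N + b * t) r = mr t lam N r + b := by
  induction b with
  | zero => simp
  | succ b ih =>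
    have h1 : N + (b + 1) * t = (N + b * t) + t := by rw [Nat.succ_mul]; omega
    rw [h1, mr_succ hp ht (by omega) hr, ih]
    omega

lemma mr_trans {n r : ℕ} (hlen : plen lam ≤ n * t) (hr : r < t) :
    mr t lam (n * t) r + n0 lam = mm t lam r + n := by
  have hplen0 : plen lam ≤ t * n0 lam := by
    have := Nat.le_mul_of_pos_left (n0 lam) ht
    rw [n0] at this ⊢
    omega
  have hmm : mm t lam r = mr t lam (t * n0 lam) r := rfl
  rcases Nat.le_total n (n0 lam) with hle | hle
  · have h1 : n * t + (n0 lam - n) * t = t * n0 lam := by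
      rw [← Nat.add_mul, Nat.add_sub_cancel' hle, Nat.mul_comm]
    have h2 := mr_add hp ht (N := n * t) hlen hr (n0 lam - n)
    rw [h1] at h2
    rw [hmm, h2]
    omega
  · have h1 : t * n0 lam + (n - n0 lam) * t = n * t := by
      rw [Nat.mul_comm t (n0 lam), ← Nat.add_mul, Nat.add_sub_cancel' hle]
    have h2 := mr_add hp ht (N := t * n0 lam) hplen0 hr (n - n0 lam)
    rw [h1] at h2
    rw [hmm, h2]
    omega

end Shift

end AK


/-- **Lemma (Ayyer–Kumari).** For `λ` of length at most `nt` and `-1 ≤ z ≤ t-1`,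
the `t`-core of `λ` is `z`-asymmetric if and only if
`m_r(λ;nt) + m_{t-r-z-1}(λ;nt) = 2n` for `0 ≤ r ≤ t-z-1` and
`m_r(λ;nt) = n` for `t-z ≤ r ≤ t-1`, indices taken modulo `t`. -/
theorem zasymmetric_core_iff (t n : ℕ) (ht : 2 ≤ t) (hn : 0 < n) (z : ℤ)
    (hz1 : -1 ≤ z) (hz2 : z ≤ (t : ℤ) - 1) (lam : ℕ → ℕ)
    (hlam : IsPartition lam) (hlen : plen lam ≤ n * t) :
    ZAsymmetric z (tCore t lam) ↔
      ((∀ r : ℕ, (r : ℤ) ≤ (t : ℤ) - z - 1 →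
          mr t lam (n * t) (r % t) +
            mr t lam (n * t) ((((t : ℤ) - r - z - 1) % t).toNat) = 2 * n) ∧
        (∀ r : ℕ, (t : ℤ) - z ≤ (r : ℤ) → r ≤ t - 1 →
          mr t lam (n * t) r = n)) := by
  have ht0 : 0 < t := by omega
  have hiter := (AK.zasym_iff_star hlam ht0 z).trans
    ((AK.star_iff_G hlam ht0 z).trans
      ((AK.G_iff_Hall (lam := lam) ht0 hz1 hz2).trans
        (AK.Hall_iff_D ht0 hz1 hz2 hlam)))
  rw [hiter]
  have hpairidx : ∀ r : ℕ, (((t : ℤ) - r - z - 1) % t).toNat = AK.pairR t z r := by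
    intro r
    rw [AK.pairR]
    congr 1
    congr 1
    ring
  have htrans : ∀ r < t, mr t lam (n * t) r + AK.n0 lam = AK.mm t lam r + n :=
    fun r hr => AK.mr_trans hlam ht0 hlen hr
  constructor
  · intro hD
    constructor
    · intro r hrz
      have hrt : r ≤ t := by omega
      rcases Nat.lt_or_ge r t with hr | hr
      · have h1 := hD.1 r hr (by omega)
        have h1' : AK.mm t lam r + AK.mm t lam (AK.pairR t z r) = 2 * AK.n0 lam := by
          exact_mod_cast h1
        have ht1 := htrans r hr
        have ht2 := htrans (AK.pairR t z r) (AK.pairR_lt ht0 r)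
        rw [Nat.mod_eq_of_lt hr, hpairidx r]
        omega
      · -- r = t, and z = -1
        have hrt' : r = t := by omega
        have hzm1 : z = -1 := by
          have hcast : (r:ℤ) = t := by exact_mod_cast hrt'
          omega
        have h1 := hD.1 0 ht0 (by omega)
        have hp0 : AK.pairR t z 0 = 0 := by
          rw [AK.pairR, hzm1]
          have h8 : ((t:ℤ) - 1 - (-1) - ((0:ℕ):ℤ)) = (t:ℤ) := by push_cast; ring
          rw [h8, Int.emod_self]
          rfl
        rw [hp0] at h1
        have h1' : AK.mm t lam 0 + AK.mm t lam 0 = 2 * AK.n0 lam := by exact_mod_cast h1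
        have hmod : r % t = 0 := by rw [hrt']; exact Nat.mod_self t
        have hidx : (((t : ℤ) - r - z - 1) % t).toNat = 0 := by
          have hcast : (r:ℤ) = t := by exact_mod_cast hrt'
          have h9 : ((t:ℤ) - r - z - 1) = 0 := by omega
          rw [h9]
          simp
        rw [hmod, hidx]
        have ht1 := htrans 0 ht0
        omega
    · intro r hrz hrt
      have hr : r < t := by omega
      have h2 := hD.2 r hr hrz
      have ht1 := htrans r hr
      omega
  · intro hRHS
    constructor
    · intro r hr hrz
      have h1 := hRHS.1 r (by omega)
      rw [Nat.mod_eq_of_lt hr, hpairidx r] at h1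
      have ht1 := htrans r hr
      have ht2 := htrans (AK.pairR t z r) (AK.pairR_lt ht0 r)
      have : AK.mm t lam r + AK.mm t lam (AK.pairR t z r) = 2 * AK.n0 lam := by omega
      exact_mod_cast this
    · intro r hr hrz
      have h2 := hRHS.2 r hrz (by omega)
      have ht1 := htrans r hr
      omega

end
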